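/- None of the matroids A, B and C has a minor isomorphic to E4. -/

import Mathlib

open Matroid Set

namespace StrongSplitter

variable {α β : Type*}

/-- The deletion `M \ D` of a set `D` from the matroid `M`. -/
def del (M : Matroid α) (D : Set α) : Matroid α := M ↾ (M.E \ D)

/-- The contraction `M / C` of a set `C` from the matroid `M`. -/
def con (M : Matroid α) (C : Set α) : Matroid α := (del M✶ C)✶

/-- `N` is a minor of `M` if it is obtained from `M` by contractions and deletions. -/
def IsMinor (N M : Matroid α) : Prop := ∃ C D : Set α, N = del (con M C) D

/-- `N` is a proper minor of `M`. -/
def IsProperMinor (N M : Matroid α) : Prop := IsMinor N M ∧ N ≠ M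

/-- The rank of a set `X` in a matroid `M` : the supremum of the cardinalities of the
independent subsets of `X`. -/
noncomputable def rk (M : Matroid α) (X : Set α) : ℕ∞ :=
  ⨆ I : {I : Set α // M.Indep I ∧ I ⊆ X}, (I : Set α).encard

/-- The rank of the matroid `M`. -/
noncomputable def rank (M : Matroid α) : ℕ∞ := rk M M.E

/-- `(A, B)` is a `k`-separation of `M` : a partition of the ground set into sets of size at
least `k` with `λ(A) = r(A) + r(B) - r(M) ≤ k - 1`. -/
def IsKSep (M : Matroid α) (k : ℕ) (A B : Set α) : Prop :=
  A ∪ B = M.E ∧ Disjoint A B ∧ k ≤ A.encard ∧ k ≤ B.encard ∧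
    rk M A + rk M B + 1 ≤ rank M + k

/-- `M` is `n`-connected (for `n ≥ 2`) if it has no `k`-separation for any `k ≤ n - 1`. -/
def NConn (M : Matroid α) (n : ℕ) : Prop :=
  ∀ (k : ℕ) (A B : Set α), 1 ≤ k → k ≤ n - 1 → ¬ IsKSep M k A B

/-- A matroid is connected when it is 2-connected, i.e. it has no 1-separation. -/
def Connected (M : Matroid α) : Prop := NConn M 2

/-- A matroid is 3-connected if it has no 1- or 2-separation; by convention we require at
least four elements. -/
def ThreeConnected (M : Matroid α) : Prop := 4 ≤ M.E.encard ∧ NConn M 3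

/-- A matroid is simple if every subset of the ground set with at most two elements is
independent (no loops and no parallel pairs). -/
def Simple (M : Matroid α) : Prop := ∀ X ⊆ M.E, X.encard ≤ 2 → M.Indep X

/-- A matroid is cosimple if its dual is simple. -/
def Cosimple (M : Matroid α) : Prop := Simple M✶

/-- A circuit is a minimal dependent set. -/
def Circuit (M : Matroid α) (C : Set α) : Prop :=
  C ⊆ M.E ∧ ¬ M.Indep C ∧ ∀ X, X ⊂ C → M.Indep X

/-- A triad is a 3-element cocircuit. -/
def Triad (M : Matroid α) (T : Set α) : Prop := Circuit M✶ T ∧ T.encard = 3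

/-- An isomorphism between matroids is a bijection between the ground sets preserving
independence. -/
def Iso (M : Matroid α) (N : Matroid β) : Prop :=
  ∃ f : α → β, Set.InjOn f M.E ∧ f '' M.E = N.E ∧
    ∀ I ⊆ M.E, (M.Indep I ↔ N.Indep (f '' I))

/-- `M` has a minor isomorphic to `N`. -/
def HasIsoMinor (M : Matroid α) (N : Matroid β) : Prop :=
  ∃ P : Matroid α, IsMinor P M ∧ Iso P N

/-- `M` is a single-element extension of `N`, i.e. `M \ e = N` for some `e`. -/
def IsExtOf (M N : Matroid α) : Prop := ∃ e ∈ M.E, N = del M {e}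

/-- `M` is a single-element coextension of `N`, i.e. `M / e = N` for some `e`. -/
def IsCoextOf (M N : Matroid α) : Prop := ∃ e ∈ M.E, N = con M {e}

/-- `M` is representable over the field `F`. -/
def RepOver (F : Type) [Field F] (M : Matroid α) : Prop :=
  ∃ (V : Type) (_ : AddCommGroup V) (_ : Module F V) (v : α → V),
    ∀ I ⊆ M.E, (M.Indep I ↔ LinearIndependent F (fun x : I => v x))

/-- A binary matroid is one representable over GF(2). -/
def Binary (M : Matroid α) : Prop := RepOver (ZMod 2) M

/-- A regular matroid is one representable over every field. -/
def Regular (M : Matroid α) : Prop := ∀ (F : Type) [Field F], RepOver F M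

/-- A matroid is almost-regular if it is non-regular and, for every element `e`,
`M \ e` or `M / e` is regular. -/
def AlmostRegular (M : Matroid α) : Prop :=
  ¬ Regular M ∧ ∀ e ∈ M.E, Regular (del M {e}) ∨ Regular (con M {e})

/-- `M` is the binary matroid represented by the matrix `A` (with columns indexed by the
ground set `Fin m`). -/
def RepBy {n m : ℕ} (M : Matroid (Fin m)) (A : Matrix (Fin n) (Fin m) (ZMod 2)) : Prop :=
  M.E = Set.univ ∧
    ∀ I : Set (Fin m), M.Indep I ↔ LinearIndependent (ZMod 2) (fun x : I => A.transpose x)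

/-- The columns of the binary representation of the cycle matroid `M(W_n)` of the wheel with
`n` spokes: spokes `inl i` are standard basis vectors, rim edges `inr i` are `e_i + e_{i+1}`. -/
def wheelMat (n : ℕ) : (Fin n ⊕ Fin n) → (Fin n → ZMod 2) := fun x j =>
  match x with
  | .inl i => if j = i then 1 else 0
  | .inr i => (if j = i then 1 else 0) + (if (j : ℕ) = ((i : ℕ) + 1) % n then 1 else 0)

/-- `N` is isomorphic to the wheel `M(W_n)`. -/
def IsWheel (n : ℕ) (N : Matroid β) : Prop :=
  ∃ W : Matroid (Fin n ⊕ Fin n), W.E = Set.univ ∧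
    (∀ I : Set (Fin n ⊕ Fin n),
      W.Indep I ↔ LinearIndependent (ZMod 2) (fun x : I => wheelMat n x)) ∧
    Iso N W

/-- `N` is isomorphic to the whirl `W^n`, obtained from the wheel `M(W_n)` by relaxing the
rim circuit-hyperplane (the bases of the whirl are the bases of the wheel, plus the rim). -/
def IsWhirl (n : ℕ) (N : Matroid β) : Prop :=
  ∃ W Wh : Matroid (Fin n ⊕ Fin n), W.E = Set.univ ∧
    (∀ I : Set (Fin n ⊕ Fin n),
      W.Indep I ↔ LinearIndependent (ZMod 2) (fun x : I => wheelMat n x)) ∧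
    Wh.E = Set.univ ∧
    (∀ B : Set (Fin n ⊕ Fin n), Wh.IsBase B ↔ (W.IsBase B ∨ B = Set.range Sum.inr)) ∧
    Iso N Wh

/-- `M` has no minor isomorphic to the wheel `M(W_n)`. -/
def NoWheelMinor (n : ℕ) (M : Matroid α) : Prop :=
  ¬ ∃ P : Matroid α, IsMinor P M ∧ IsWheel n P

/-- `M` has no minor isomorphic to the whirl `W^n`. -/
def NoWhirlMinor (n : ℕ) (M : Matroid α) : Prop :=
  ¬ ∃ P : Matroid α, IsMinor P M ∧ IsWhirl n P


/-- The matrix `[I_5 | D4]` representing `E4` over GF(2). -/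
def e4Mat : Matrix (Fin 5) (Fin 10) (ZMod 2) :=
  !![1,0,0,0,0, 0,1,1,1,1;
     0,1,0,0,0, 1,0,1,1,0;
     0,0,1,0,0, 1,1,0,1,0;
     0,0,0,1,0, 1,1,1,1,0;
     0,0,0,0,1, 1,1,0,0,1]

/-- The matrix `[I_5 | D5]` representing `E5` over GF(2). -/
def e5Mat : Matrix (Fin 5) (Fin 10) (ZMod 2) :=
  !![1,0,0,0,0, 0,1,1,1,1;
     0,1,0,0,0, 1,0,1,1,0;
     0,0,1,0,0, 1,1,0,1,1;
     0,0,0,1,0, 1,1,1,1,0;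
     0,0,0,0,1, 1,1,0,0,0]

/-- The matrix `[I_6 | D]` representing `M12` over GF(2). -/
def m12Mat : Matrix (Fin 6) (Fin 12) (ZMod 2) :=
  !![1,0,0,0,0,0, 0,1,1,1,1,1;
     0,1,0,0,0,0, 1,0,1,1,0,0;
     0,0,1,0,0,0, 1,1,0,1,1,0;
     0,0,0,1,0,0, 1,1,1,1,0,1;
     0,0,0,0,1,0, 1,1,0,0,0,1;
     0,0,0,0,0,1, 1,0,0,1,1,1]

/-- The matrix `[I_5 | D]` representing `R17` over GF(2). -/
def r17Mat : Matrix (Fin 5) (Fin 17) (ZMod 2) :=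
  !![1,0,0,0,0, 0,1,1,1,1,0,0,0,0,1,1,1;
     0,1,0,0,0, 1,0,1,1,0,0,1,1,1,0,0,1;
     0,0,1,0,0, 1,1,0,1,1,1,0,0,1,0,1,1;
     0,0,0,1,0, 1,1,1,1,0,1,0,1,0,1,0,0;
     0,0,0,0,1, 1,1,0,0,0,1,1,0,0,1,1,1]

/-- The matrix `[I_5 | D5 | (0,0,1,0,1)ᵀ]` representing the extension `A` of `E5`. -/
def aMat : Matrix (Fin 5) (Fin 11) (ZMod 2) :=
  !![1,0,0,0,0, 0,1,1,1,1, 0;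
     0,1,0,0,0, 1,0,1,1,0, 0;
     0,0,1,0,0, 1,1,0,1,1, 1;
     0,0,0,1,0, 1,1,1,1,0, 0;
     0,0,0,0,1, 1,1,0,0,0, 1]

/-- The matrix `[I_5 | D5 | (1,0,0,1,1)ᵀ]` representing the extension `B` of `E5`. -/
def bMat : Matrix (Fin 5) (Fin 11) (ZMod 2) :=
  !![1,0,0,0,0, 0,1,1,1,1, 1;
     0,1,0,0,0, 1,0,1,1,0, 0;
     0,0,1,0,0, 1,1,0,1,1, 0;
     0,0,0,1,0, 1,1,1,1,0, 1;
     0,0,0,0,1, 1,1,0,0,0, 1]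

/-- The matrix `[I_5 | D5 | (1,1,0,0,1)ᵀ]` representing the extension `C` of `E5`. -/
def cMat : Matrix (Fin 5) (Fin 11) (ZMod 2) :=
  !![1,0,0,0,0, 0,1,1,1,1, 1;
     0,1,0,0,0, 1,0,1,1,0, 1;
     0,0,1,0,0, 1,1,0,1,1, 0;
     0,0,0,1,0, 1,1,1,1,0, 0;
     0,0,0,0,1, 1,1,0,0,0, 1]

/-- The matrix `[I_5 | D]`, `D` the circulant with first row `(1,1,0,0,1)`, representing
`R10` over GF(2). -/
def r10Mat : Matrix (Fin 5) (Fin 10) (ZMod 2) :=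
  !![1,0,0,0,0, 1,1,0,0,1;
     0,1,0,0,0, 1,1,1,0,0;
     0,0,1,0,0, 0,1,1,1,0;
     0,0,0,1,0, 0,0,1,1,1;
     0,0,0,0,1, 1,0,0,1,1]




/-! ### Auxiliary development -/

section Aux

open List

open List in
/-- Injectivity of `toFinset` on sublists of a `Nodup` list. -/
theorem sublist_toFinset_inj {γ : Type*} [DecidableEq γ] :
    ∀ {l s t : List γ}, l.Nodup → s <+ l → t <+ l → s.toFinset = t.toFinset → s = t := by
  intro l
  induction l with
  | nil => intro s t _ hs ht _; rw [List.sublist_nil.mp hs, List.sublist_nil.mp ht]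
  | cons a l ih =>
    intro s t hl hs ht hst
    obtain ⟨hal, hl'⟩ := List.nodup_cons.mp hl
    rcases List.sublist_cons_iff.mp hs with hs' | ⟨s', rfl, hs'⟩
    · rcases List.sublist_cons_iff.mp ht with ht' | ⟨t', rfl, ht'⟩
      · exact ih hl' hs' ht' hst
      · exfalso
        have haT : a ∈ s.toFinset := by rw [hst]; simp
        exact hal (hs'.subset (List.mem_toFinset.mp haT))
    · rcases List.sublist_cons_iff.mp ht with ht' | ⟨t', rfl, ht'⟩
      · exfalso
        have haT : a ∈ t.toFinset := by rw [← hst]; simp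
        exact hal (ht'.subset (List.mem_toFinset.mp haT))
      · have has' : a ∉ s' := fun h => hal (hs'.subset h)
        have hat' : a ∉ t' := fun h => hal (ht'.subset h)
        have hst' : s'.toFinset = t'.toFinset := by
          have h2 := congrArg (fun (F : Finset γ) => F.erase a) hst
          simpa [List.toFinset_cons, Finset.erase_insert,
            List.mem_toFinset, has', hat'] using h2
        rw [ih hl' hs' ht' hst']

/-- A generic counting principle : the number of sets satisfying `P` equals the length of
the filtered list of sublists of an enumerating list. -/
theorem card_eq_count {m : ℕ} (l0 : List (Fin m)) (h0 : l0.Nodup)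
    (P : Set (Fin m) → Prop) (q : List (Fin m) → Bool)
    (hq : ∀ l : List (Fin m), l <+ l0 → (P ↑l.toFinset ↔ q l = true))
    (hP : ∀ X : Set (Fin m), P X → X ⊆ ↑l0.toFinset) :
    Nat.card {X : Set (Fin m) // P X} = (l0.sublists.filter q).length := by
  classical
  set L : List (Set (Fin m)) := (l0.sublists.filter q).map (fun l => ↑l.toFinset) with hL
  have hmem : ∀ X : Set (Fin m), X ∈ L ↔ P X := by
    intro X
    constructor
    · intro hx
      simp only [hL, List.mem_map, List.mem_filter, List.mem_sublists] at hx
      obtain ⟨l, ⟨hsl, hql⟩, rfl⟩ := hx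
      exact (hq l hsl).mpr hql
    · intro hX
      have hXsub := hP X hX
      set l := l0.filter (fun i => decide (i ∈ X)) with hldef
      have hsl : l <+ l0 := List.filter_sublist (l := l0)
      have hXl : (↑l.toFinset : Set (Fin m)) = X := by
        ext a
        simp only [Finset.mem_coe, List.mem_toFinset, hldef, List.mem_filter,
          decide_eq_true_eq]
        constructor
        · rintro ⟨-, h⟩; exact h
        · intro h
          refine ⟨?_, h⟩
          have := hXsub h
          simpa [List.mem_toFinset] using this
      rw [hL]
      refine List.mem_map.mpr ⟨l, List.mem_filter.mpr ⟨List.mem_sublists.mpr hsl, ?_⟩, hXl⟩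
      exact (hq l hsl).mp (by rw [hXl]; exact hX)
  have hnd : L.Nodup := by
    rw [hL]
    refine List.Nodup.map_on ?_ ((List.nodup_sublists.mpr h0).filter q)
    intro x hx y hy hxy
    rw [List.mem_filter, List.mem_sublists] at hx hy
    exact sublist_toFinset_inj h0 hx.1 hy.1 (Finset.coe_injective hxy)
  calc Nat.card {X : Set (Fin m) // P X}
      = Nat.card {X : Set (Fin m) // X ∈ L} :=
        Nat.card_congr (Equiv.subtypeEquivRight (fun X => (hmem X).symm))
    _ = Nat.card {X : Set (Fin m) // X ∈ L.toFinset} :=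
        Nat.card_congr (Equiv.subtypeEquivRight (fun X => (List.mem_toFinset).symm))
    _ = L.toFinset.card := Nat.card_eq_finsetCard _
    _ = L.length := List.toFinset_card_of_nodup hnd
    _ = (l0.sublists.filter q).length := by rw [hL, List.length_map]

/-! #### The computational layer -/

/-- Encode a vector in `(ZMod 2)⁵` as a natural number. -/
def enc (w : Fin 5 → ZMod 2) : ℕ :=
  (w 0).val + 2 * (w 1).val + 4 * (w 2).val + 8 * (w 3).val + 16 * (w 4).val

theorem enc_add : ∀ a b : Fin 5 → ZMod 2, enc (a + b) = enc a ^^^ enc b := by decide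

theorem enc_eq_zero : ∀ a : Fin 5 → ZMod 2, enc a = 0 ↔ a = 0 := by decide

/-- xor-fold of a list of naturals. -/
def xorL : List ℕ → ℕ
  | [] => 0
  | a :: l => a ^^^ xorL l

/-- Boolean test for linear independence of the columns indexed by `t`. -/
def okB {m : ℕ} (ev : Fin m → ℕ) (t : List (Fin m)) : Bool :=
  t.sublists.all (fun s => s.isEmpty || xorL (s.map ev) != 0)

/-- Sum of a finite set of columns. -/
def sumV {m : ℕ} (v : Fin m → Fin 5 → ZMod 2) (T : Finset (Fin m)) : Fin 5 → ZMod 2 :=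
  ∑ i ∈ T, v i

/-- The predicate expressing that all nonempty subsets of `X` have nonzero column sum. -/
def GoodS {m : ℕ} (v : Fin m → Fin 5 → ZMod 2) (X : Set (Fin m)) : Prop :=
  ∀ T : Finset (Fin m), ↑T ⊆ X → T.Nonempty → sumV v T ≠ 0

theorem enc_sumV {m : ℕ} (v : Fin m → Fin 5 → ZMod 2) :
    ∀ s : List (Fin m), s.Nodup →
      enc (sumV v s.toFinset) = xorL (s.map (fun i => enc (v i))) := by
  intro s
  induction s with
  | nil =>
    intro _
    show enc (sumV v ∅) = xorL []
    rw [sumV, Finset.sum_empty]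
    rfl
  | cons a s ih =>
    intro h
    obtain ⟨ha, hs⟩ := List.nodup_cons.mp h
    have ha' : a ∉ s.toFinset := by simpa using ha
    show enc (sumV v (a :: s).toFinset) = xorL (enc (v a) :: s.map (fun i => enc (v i)))
    rw [List.toFinset_cons, sumV, Finset.sum_insert ha', xorL]
    rw [show (∑ i ∈ s.toFinset, v i) = sumV v s.toFinset from rfl]
    rw [enc_add, ih hs]

theorem goodS_iff_okB {m : ℕ} (v : Fin m → Fin 5 → ZMod 2) (ev : Fin m → ℕ)
    (hev : ∀ i, ev i = enc (v i)) {t : List (Fin m)} (ht : t.Nodup) :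
    GoodS v ↑t.toFinset ↔ okB ev t = true := by
  have hmap : ∀ s : List (Fin m), s.map ev = s.map (fun i => enc (v i)) :=
    fun s => List.map_congr_left (fun i _ => hev i)
  constructor
  · intro hG
    rw [okB, List.all_eq_true]
    intro s hs
    rw [List.mem_sublists] at hs
    rcases s with _ | ⟨a, s'⟩
    · rfl
    · have hsnd : (a :: s').Nodup := ht.sublist hs
      have hsub : (↑(a :: s').toFinset : Set (Fin m)) ⊆ ↑t.toFinset := by
        intro x hx
        simp only [Finset.mem_coe, List.mem_toFinset] at hx ⊢
        exact hs.subset hx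
      have hne : ((a :: s').toFinset).Nonempty := ⟨a, by simp⟩
      have hgood := hG _ hsub hne
      have hxor : xorL ((a :: s').map ev) ≠ 0 := by
        rw [hmap, ← enc_sumV v _ hsnd]
        intro h0
        exact hgood ((enc_eq_zero _).mp h0)
      simpa using hxor
  · intro hok T hTsub hTne
    classical
    set s := t.filter (fun i => decide (i ∈ T)) with hsdef
    have hssub : s <+ t := List.filter_sublist (l := t)
    have hmem : s ∈ t.sublists := List.mem_sublists.mpr hssub
    have hall := List.all_eq_true.mp hok s hmem
    have hsT : s.toFinset = T := by
      ext a
      simp only [List.mem_toFinset, hsdef, List.mem_filter, decide_eq_true_eq]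
      constructor
      · rintro ⟨-, h⟩; exact h
      · intro h
        refine ⟨?_, h⟩
        have := hTsub h
        simpa [List.mem_toFinset] using this
    have hsne : s ≠ [] := by
      obtain ⟨x, hx⟩ := hTne
      intro h0
      rw [h0] at hsT
      rw [← hsT] at hx
      simp at hx
    have hxor : xorL (s.map ev) ≠ 0 := by
      have h' : s = [] ∨ xorL (s.map ev) ≠ 0 := by simpa using hall
      rcases h' with h | h
      · exact absurd h hsne
      · exact h
    intro h0
    apply hxor
    rw [hmap, ← enc_sumV v s (ht.sublist hssub), hsT, h0]
    rfl

/-- Linear independence over `ZMod 2` is equivalent to all nonempty subset sums being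
nonzero. -/
theorem li_iff {m : ℕ} (v : Fin m → Fin 5 → ZMod 2) (X : Set (Fin m)) :
    LinearIndependent (ZMod 2) (fun x : X => v x) ↔ GoodS v X := by
  classical
  have hone : ∀ a : ZMod 2, a ≠ 0 → a = 1 := by decide
  constructor
  · intro h T hTX hTne hT0
    have hkey : ∑ x : X, (if (x : Fin m) ∈ T then (1 : ZMod 2) else 0) • v ↑x = 0 := by
      have e1 : ∑ x : X, (if (x : Fin m) ∈ T then (1 : ZMod 2) else 0) • v ↑x
          = ∑ i ∈ X.toFinset, (if i ∈ T then (1 : ZMod 2) else 0) • v i :=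
        Finset.sum_set_coe (f := fun i => (if i ∈ T then (1 : ZMod 2) else 0) • v i) X
      have e2 : ∑ i ∈ X.toFinset, (if i ∈ T then (1 : ZMod 2) else 0) • v i
          = ∑ i ∈ X.toFinset.filter (· ∈ T), v i := by
        rw [Finset.sum_filter]
        exact Finset.sum_congr rfl (fun i _ => by split <;> simp
          )
      have e3 : X.toFinset.filter (· ∈ T) = T := by
        rw [Finset.filter_mem_eq_inter]
        exact Finset.inter_eq_right.mpr (Set.subset_toFinset.mpr hTX)
      rw [e1, e2, e3]
      exact hT0
    have := Fintype.linearIndependent_iff.mp h _ hkey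
    obtain ⟨a, ha⟩ := hTne
    have h2 := this ⟨a, hTX ha⟩
    rw [if_pos ha] at h2
    exact one_ne_zero h2
  · intro h
    rw [Fintype.linearIndependent_iff]
    intro g hg
    set l : Fin m → ZMod 2 := fun i => if hi : i ∈ X then g ⟨i, hi⟩ else 0 with hldef
    have hXT : ∀ x : X, l ↑x = g x := fun x => dif_pos x.2
    set T : Finset (Fin m) := X.toFinset.filter (fun i => l i ≠ 0) with hTdef
    have hsum : ∑ i ∈ T, v i = 0 := by
      have e1 : ∑ i ∈ X.toFinset, l i • v i = 0 := by
        rw [← Finset.sum_set_coe (f := fun i => l i • v i) X, ← hg]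
        exact Finset.sum_congr rfl (fun x _ => by rw [hXT])
      have e2 : ∑ i ∈ T, l i • v i = ∑ i ∈ X.toFinset, l i • v i :=
        Finset.sum_filter_of_ne (fun i _ hne => by
          intro h0
          exact hne (by rw [h0, zero_smul]))
      have e3 : ∑ i ∈ T, v i = ∑ i ∈ T, l i • v i :=
        Finset.sum_congr rfl (fun i hi => by
          have hne : l i ≠ 0 := (Finset.mem_filter.mp hi).2
          rw [hone _ hne, one_smul])
      rw [e3, e2, e1]
    by_cases hne : T.Nonempty
    · exact absurd hsum (h T (fun i hi =>
        Set.mem_toFinset.mp (Finset.mem_filter.mp hi).1) hne)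
    · intro x
      have hx : (x : Fin m) ∉ T := fun hx => hne ⟨_, hx⟩
      rw [hTdef, Finset.mem_filter, not_and] at hx
      have := hx (Set.mem_toFinset.mpr x.2)
      rw [not_not] at this
      rw [← hXT x]
      exact this

/-! #### The invariant -/

/-- The number of independent sets of size at most four. -/
noncomputable def inv4 {γ : Type*} (N : Matroid γ) : ℕ :=
  Nat.card {X : Set γ // N.Indep X ∧ X.encard ≤ 4}

theorem inv4_eq_of_iso {α β : Type*} {M : Matroid α} {N : Matroid β} (h : Iso M N) :
    inv4 M = inv4 N := by
  obtain ⟨f, hinj, himg, hind⟩ := h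
  refine Nat.card_congr (Equiv.ofBijective
    (fun X => ⟨f '' X.1, ?_, ?_⟩) ⟨?_, ?_⟩)
  · exact (hind X.1 X.2.1.subset_ground).mp X.2.1
  · rw [(hinj.mono X.2.1.subset_ground).encard_image]
    exact X.2.2
  · rintro ⟨X, hX⟩ ⟨Y, hY⟩ hXY
    simp only [Subtype.mk.injEq] at hXY ⊢
    exact (hinj.image_eq_image_iff hX.1.subset_ground hY.1.subset_ground).mp hXY
  · rintro ⟨Y, hY, hYc⟩
    have hYE : Y ⊆ N.E := hY.subset_ground
    have hYE' : Y ⊆ f '' M.E := by rwa [himg]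
    set X : Set α := f ⁻¹' Y ∩ M.E with hXdef
    have hXE : X ⊆ M.E := Set.inter_subset_right
    have himgX : f '' X = Y := by
      rw [hXdef, Set.image_preimage_inter, himg]
      exact Set.inter_eq_left.mpr hYE
    have hXind : M.Indep X := by
      rw [hind X hXE, himgX]
      exact hY
    refine ⟨⟨X, hXind, ?_⟩, ?_⟩
    · rw [← (hinj.mono hXE).encard_image, himgX]
      exact hYc
    · simp only [Subtype.mk.injEq]
      exact himgX

/-! #### Contraction of an independent set -/

theorem dual_basis_iff_base {α : Type*} {M : Matroid α} {I D : Set α}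
    (hI : M.Indep I) (hD : D ⊆ M.E \ I) :
    M✶.IsBasis D (M.E \ I) ↔ M✶.IsBase D := by
  have hco : M✶.Coindep I := by rw [Matroid.coindep_def, Matroid.dual_dual]; exact hI
  obtain ⟨B1, hB1, hB1ss⟩ := hco.exists_isBase_subset_compl
  rw [Matroid.dual_ground] at hB1ss
  constructor
  · intro h
    exact h.isBase_of_isBase_subset hB1 hB1ss
  · intro h
    obtain ⟨J, hJ, hDJ⟩ := h.indep.subset_isBasis_of_subset hD
      (by rw [Matroid.dual_ground]; exact Set.diff_subset)
    rwa [← h.eq_of_subset_indep hJ.indep hDJ] at hJ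

theorem con_base_iff {α : Type*} {M : Matroid α} {I : Set α} (hI : M.Indep I)
    (B : Set α) :
    (con M I).IsBase B ↔ M.IsBase (B ∪ I) ∧ Disjoint B I := by
  have hIE := hI.subset_ground
  have hbr : ∀ X : Set α, (del M✶ I).IsBase X ↔ M✶.IsBasis X (M.E \ I) := by
    intro X
    rw [del, Matroid.dual_ground]
    exact Matroid.isBase_restrict_iff Set.diff_subset
  rw [con, Matroid.dual_isBase_iff', hbr, del, Matroid.restrict_ground_eq,
    Matroid.dual_ground]
  constructor
  · rintro ⟨hB1, hB2⟩
    rw [dual_basis_iff_base hI Set.diff_subset] at hB1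
    have hBase := hB1.compl_isBase_of_dual
    have hset : M.E \ ((M.E \ I) \ B) = B ∪ I := by
      ext x
      simp only [Set.mem_diff, Set.mem_union]
      constructor
      · rintro ⟨hxE, hx⟩
        by_cases hxI : x ∈ I
        · exact Or.inr hxI
        · by_cases hxB : x ∈ B
          · exact Or.inl hxB
          · exact absurd ⟨⟨hxE, hxI⟩, hxB⟩ hx
      · rintro (hxB | hxI)
        · exact ⟨(hB2 hxB).1, fun hcon => hcon.2 hxB⟩
        · exact ⟨hIE hxI, fun hcon => hcon.1.2 hxI⟩
    rw [hset] at hBase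
    exact ⟨hBase, (Set.subset_diff.mp hB2).2⟩
  · rintro ⟨hBase, hdisj⟩
    have hBE : B ⊆ M.E \ I := Set.subset_diff.mpr
      ⟨(Set.subset_union_left).trans hBase.subset_ground, hdisj⟩
    refine ⟨?_, hBE⟩
    rw [dual_basis_iff_base hI Set.diff_subset]
    have hset : (M.E \ I) \ B = M.E \ (B ∪ I) := by rw [Set.diff_diff, Set.union_comm]
    rw [hset]
    exact hBase.compl_isBase_dual

theorem con_indep_iff {α : Type*} {M : Matroid α} {I : Set α} (hI : M.Indep I)
    (X : Set α) :
    (con M I).Indep X ↔ Disjoint X I ∧ M.Indep (X ∪ I) := by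
  rw [Matroid.indep_iff]
  constructor
  · rintro ⟨B, hB, hXB⟩
    rw [con_base_iff hI] at hB
    exact ⟨hB.2.mono_left hXB, hB.1.indep.subset (Set.union_subset_union_left I hXB)⟩
  · rintro ⟨hdisj, hind⟩
    obtain ⟨B0, hB0, hss⟩ := hind.exists_isBase_superset
    refine ⟨B0 \ I, ?_, ?_⟩
    · rw [con_base_iff hI]
      refine ⟨?_, Set.disjoint_sdiff_left⟩
      rwa [Set.diff_union_self, Set.union_eq_self_of_subset_right
        ((Set.subset_union_right).trans hss)]
    · exact Set.subset_diff.mpr ⟨(Set.subset_union_left).trans hss, hdisj⟩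

/-! #### Structure of ten-element minors -/

theorem minor_struct {M P : Matroid (Fin 11)} (hME : M.E = Set.univ)
    (hmin : IsMinor P M) (hPE : P.E.encard = 10) :
    ∃ e : Fin 11, P = del M {e} ∨ P = con M {e} := by
  obtain ⟨C, D, rfl⟩ := hmin
  have hconE : (con M C).E = M.E \ C := by
    rw [con, Matroid.dual_ground, del, Matroid.restrict_ground_eq, Matroid.dual_ground]
  have hPE' : ((Set.univ \ (C ∪ D)) : Set (Fin 11)).encard = 10 := by
    have : (del (con M C) D).E = (M.E \ C) \ D := by
      rw [del, Matroid.restrict_ground_eq, hconE]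
    rw [this, hME, Set.diff_diff] at hPE
    exact hPE
  have h11 : (Set.univ : Set (Fin 11)).encard = 11 := by
    simp [Set.encard_univ]
  have hsum := Set.encard_diff_add_encard_of_subset (Set.subset_univ (C ∪ D))
  rw [hPE', h11] at hsum
  have hS : (C ∪ D).encard = 1 := by
    rcases eq_or_ne ((C ∪ D).encard) ⊤ with ht | ht
    · rw [ht] at hsum
      simp at hsum
    · lift (C ∪ D).encard to ℕ using ht with k hk
      have : (10 : ℕ) + k = 11 := by exact_mod_cast hsum
      have : k = 1 := by omega
      exact_mod_cast congrArg (Nat.cast : ℕ → ℕ∞) this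
  obtain ⟨e, hCD⟩ := Set.encard_eq_one.mp hS
  refine ⟨e, ?_⟩
  have hCe : C ⊆ {e} := hCD ▸ Set.subset_union_left
  have hDe : D ⊆ {e} := hCD ▸ Set.subset_union_right
  rcases Set.subset_singleton_iff_eq.mp hCe with hC0 | hC1
  · left
    have hcon : con M C = M := by
      rw [hC0, con, del, Set.diff_empty, Matroid.restrict_ground_eq_self,
        Matroid.dual_dual]
    have hD1 : D = {e} := by
      rw [hC0, Set.empty_union] at hCD
      exact hCD
    rw [hcon, hD1]
  · right
    have hgrd : (con M {e}).E \ D = (con M {e}).E := by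
      refine Set.Subset.antisymm Set.diff_subset (fun x hx => ?_)
      refine ⟨hx, fun hxD => ?_⟩
      have hxe : x = e := hDe hxD
      rw [hC1] at hconE
      rw [hconE, hME] at hx
      exact hx.2 (by rw [hxe]; exact rfl)
    rw [hC1, del, hgrd, Matroid.restrict_ground_eq_self]

/-! #### Counting functions -/

def qDel {m : ℕ} (ev : Fin m → ℕ) (l : List (Fin m)) : Bool :=
  decide (l.length ≤ 4) && okB ev l

def qCon (ev : Fin 11 → ℕ) (e : Fin 11) (l : List (Fin 11)) : Bool :=
  decide (l.length ≤ 4) && okB ev (e :: l)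

def cntA {m : ℕ} (ev : Fin m → ℕ) : ℕ :=
  ((List.finRange m).sublists.filter (qDel ev)).length

def cntD (ev : Fin 11 → ℕ) (e : Fin 11) : ℕ :=
  (((List.finRange 11).filter (fun i => decide (i ≠ e))).sublists.filter (qDel ev)).length

def cntC (ev : Fin 11 → ℕ) (e : Fin 11) : ℕ :=
  (((List.finRange 11).filter (fun i => decide (i ≠ e))).sublists.filter (qCon ev e)).length

theorem encard_coe_le_four {m : ℕ} {l : List (Fin m)} (hl : l.Nodup) :
    (↑l.toFinset : Set (Fin m)).encard ≤ 4 ↔ l.length ≤ 4 := by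
  rw [Set.encard_coe_eq_coe_finsetCard, List.toFinset_card_of_nodup hl]
  exact_mod_cast Nat.cast_le (α := ℕ∞)

theorem indep_iff_goodS {m : ℕ} {M : Matroid (Fin m)}
    {A : Matrix (Fin 5) (Fin m) (ZMod 2)} (hM : RepBy M A) (X : Set (Fin m)) :
    M.Indep X ↔ GoodS A.transpose X :=
  (hM.2 X).trans (li_iff A.transpose X)

theorem inv4_repBy {m : ℕ} (M : Matroid (Fin m)) (A : Matrix (Fin 5) (Fin m) (ZMod 2))
    (hM : RepBy M A) (ev : Fin m → ℕ) (hev : ∀ i, ev i = enc (A.transpose i)) :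
    inv4 M = cntA ev := by
  refine card_eq_count (List.finRange m) (List.nodup_finRange m) _ (qDel ev) ?_ ?_
  · intro l hsl
    have hl : l.Nodup := (List.nodup_finRange m).sublist hsl
    rw [qDel, Bool.and_eq_true, decide_eq_true_eq]
    rw [indep_iff_goodS hM, goodS_iff_okB A.transpose ev hev hl, encard_coe_le_four hl]
    exact and_comm
  · intro X _
    intro x _
    simp [List.mem_toFinset, List.mem_finRange]

theorem inv4_del (M : Matroid (Fin 11)) (A : Matrix (Fin 5) (Fin 11) (ZMod 2))
    (hM : RepBy M A) (ev : Fin 11 → ℕ) (hev : ∀ i, ev i = enc (A.transpose i))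
    (e : Fin 11) :
    inv4 (del M {e}) = cntD ev e := by
  have hl0 : ∀ a : Fin 11, a ∈ (List.finRange 11).filter (fun i => decide (i ≠ e)) ↔ a ≠ e := by
    intro a
    simp [List.mem_filter, List.mem_finRange]
  have hdel : ∀ X : Set (Fin 11), (del M {e}).Indep X ↔ M.Indep X ∧ e ∉ X := by
    intro X
    rw [del, Matroid.restrict_indep_iff, hM.1]
    constructor
    · rintro ⟨hi, hs⟩
      exact ⟨hi, fun he => (hs he).2 rfl⟩
    · rintro ⟨hi, he⟩
      exact ⟨hi, fun x hx => ⟨trivial, fun hxe => he ((Set.mem_singleton_iff.mp hxe) ▸ hx)⟩⟩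
  refine card_eq_count _ ((List.nodup_finRange 11).filter _) _ (qDel ev) ?_ ?_
  · intro l hsl
    have hl : l.Nodup := ((List.nodup_finRange 11).filter _).sublist hsl
    have hel : e ∉ l := fun hmem => by
      have := (hl0 e).mp (hsl.subset hmem)
      exact this rfl
    rw [qDel, Bool.and_eq_true, decide_eq_true_eq]
    rw [hdel, indep_iff_goodS hM, goodS_iff_okB A.transpose ev hev hl,
      encard_coe_le_four hl]
    have he' : e ∉ (↑l.toFinset : Set (Fin 11)) := by
      simpa [List.mem_toFinset] using hel
    tauto
  · intro X hX x hx
    have hxe : x ≠ e := fun h => ((hdel X).mp hX.1).2 (h ▸ hx)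
    simpa [List.mem_toFinset] using (hl0 x).mpr hxe

theorem inv4_con (M : Matroid (Fin 11)) (A : Matrix (Fin 5) (Fin 11) (ZMod 2))
    (hM : RepBy M A) (ev : Fin 11 → ℕ) (hev : ∀ i, ev i = enc (A.transpose i))
    (e : Fin 11) (he : M.Indep {e}) :
    inv4 (con M {e}) = cntC ev e := by
  have hl0 : ∀ a : Fin 11, a ∈ (List.finRange 11).filter (fun i => decide (i ≠ e)) ↔ a ≠ e := by
    intro a
    simp [List.mem_filter, List.mem_finRange]
  have hcon : ∀ X : Set (Fin 11), (con M {e}).Indep X ↔ e ∉ X ∧ M.Indep (insert e X) := by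
    intro X
    rw [con_indep_iff he, Set.disjoint_singleton_right, Set.union_singleton]
  refine card_eq_count _ ((List.nodup_finRange 11).filter _) _ (qCon ev e) ?_ ?_
  · intro l hsl
    have hl : l.Nodup := ((List.nodup_finRange 11).filter _).sublist hsl
    have hel : e ∉ l := fun hmem => by
      have := (hl0 e).mp (hsl.subset hmem)
      exact this rfl
    have hnd : (e :: l).Nodup := List.nodup_cons.mpr ⟨hel, hl⟩
    rw [qCon, Bool.and_eq_true, decide_eq_true_eq]
    rw [hcon, encard_coe_le_four hl]
    have hins : insert e (↑l.toFinset : Set (Fin 11)) = ↑(e :: l).toFinset := by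
      rw [List.toFinset_cons, Finset.coe_insert]
    rw [hins, indep_iff_goodS hM, goodS_iff_okB A.transpose ev hev hnd]
    have he' : e ∉ (↑l.toFinset : Set (Fin 11)) := by
      simpa [List.mem_toFinset] using hel
    tauto
  · intro X hX x hx
    have hxe : x ≠ e := fun h => ((hcon X).mp hX.1).1 (h ▸ hx)
    simpa [List.mem_toFinset] using (hl0 x).mpr hxe

theorem indep_singleton_of_okB {M : Matroid (Fin 11)}
    {A : Matrix (Fin 5) (Fin 11) (ZMod 2)} (hM : RepBy M A) (ev : Fin 11 → ℕ)
    (hev : ∀ i, ev i = enc (A.transpose i)) (e : Fin 11) (hok : okB ev [e] = true) :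
    M.Indep {e} := by
  have h1 : ({e} : Set (Fin 11)) = ↑([e] : List (Fin 11)).toFinset := by simp
  rw [h1, indep_iff_goodS hM, goodS_iff_okB A.transpose ev hev (by simp)]
  exact hok

/-! #### Main per-matrix argument -/

theorem main_aux {E4 : Matroid (Fin 10)} (hE4 : RepBy E4 e4Mat)
    {M : Matroid (Fin 11)} {A : Matrix (Fin 5) (Fin 11) (ZMod 2)} (hM : RepBy M A)
    (ev : Fin 11 → ℕ) (hev : ∀ i, ev i = enc (A.transpose i))
    (h355 : inv4 E4 = 355)
    (hone : ∀ e : Fin 11, okB ev [e] = true)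
    (hcnt : ∀ e : Fin 11, cntD ev e ≠ 355 ∧ cntC ev e ≠ 355) :
    ¬ HasIsoMinor M E4 := by
  rintro ⟨P, hmin, hiso⟩
  have hPE : P.E.encard = 10 := by
    obtain ⟨f, hinj, himg, -⟩ := hiso
    have h1 := hinj.encard_image
    rw [himg, hE4.1] at h1
    rw [← h1]
    simp [Set.encard_univ]
  have hival : inv4 P = 355 := (inv4_eq_of_iso hiso).trans h355
  obtain ⟨e, hP | hP⟩ := minor_struct hM.1 hmin hPE
  · exact (hcnt e).1 (by rw [← inv4_del M A hM ev hev e, ← hP, hival])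
  · have hindep : M.Indep {e} := indep_singleton_of_okB hM ev hev e (hone e)
    exact (hcnt e).2 (by rw [← inv4_con M A hM ev hev e hindep, ← hP, hival])

/-! #### The computations -/

def ev4 : Fin 10 → ℕ := ![1,2,4,8,16, 30,29,11,15,17]
def evA : Fin 11 → ℕ := ![1,2,4,8,16, 30,29,11,15,5, 20]
def evB : Fin 11 → ℕ := ![1,2,4,8,16, 30,29,11,15,5, 25]
def evC : Fin 11 → ℕ := ![1,2,4,8,16, 30,29,11,15,5, 19]

set_option maxRecDepth 2000000 in
theorem hev4 : ∀ i, ev4 i = enc (e4Mat.transpose i) := by decide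

set_option maxRecDepth 2000000 in
theorem hevA : ∀ i, evA i = enc (aMat.transpose i) := by decide

set_option maxRecDepth 2000000 in
theorem hevB : ∀ i, evB i = enc (bMat.transpose i) := by decide

set_option maxRecDepth 2000000 in
theorem hevC : ∀ i, evC i = enc (cMat.transpose i) := by decide

set_option maxRecDepth 2000000 in
set_option maxHeartbeats 4000000 in
theorem cntA_e4 : cntA ev4 = 355 := by decide

set_option maxRecDepth 2000000 in
theorem oneA : ∀ e : Fin 11, okB evA [e] = true := by decide

set_option maxRecDepth 2000000 in
theorem oneB : ∀ e : Fin 11, okB evB [e] = true := by decide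

set_option maxRecDepth 2000000 in
theorem oneC : ∀ e : Fin 11, okB evC [e] = true := by decide

set_option maxRecDepth 2000000 in
set_option maxHeartbeats 40000000 in
theorem cntDA : ∀ e : Fin 11, cntD evA e ≠ 355 ∧ cntC evA e ≠ 355 := by decide

set_option maxRecDepth 2000000 in
set_option maxHeartbeats 40000000 in
theorem cntDB : ∀ e : Fin 11, cntD evB e ≠ 355 ∧ cntC evB e ≠ 355 := by decide

set_option maxRecDepth 2000000 in
set_option maxHeartbeats 40000000 in
theorem cntDC : ∀ e : Fin 11, cntD evC e ≠ 355 ∧ cntC evC e ≠ 355 := by decide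

end Aux

/-- None of the matroids `A`, `B` and `C` has a minor isomorphic to `E4`. -/
theorem abc_no_e4_minor
    (E4 : Matroid (Fin 10)) (hE4 : RepBy E4 e4Mat)
    (A : Matroid (Fin 11)) (hA : RepBy A aMat)
    (B : Matroid (Fin 11)) (hB : RepBy B bMat)
    (C : Matroid (Fin 11)) (hC : RepBy C cMat) :
    ¬ HasIsoMinor A E4 ∧ ¬ HasIsoMinor B E4 ∧ ¬ HasIsoMinor C E4 := by
  have h355 : inv4 E4 = 355 := by
    rw [inv4_repBy E4 e4Mat hE4 ev4 hev4]
    exact cntA_e4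
  exact ⟨main_aux hE4 hA evA hevA h355 oneA cntDA,
    main_aux hE4 hB evB hevB h355 oneB cntDB,
    main_aux hE4 hC evC hevC h355 oneC cntDC⟩

end StrongSplitter
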